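/- There is a bijection between the set of integer sequences (λ_1,...,λ_k) of weight n satisfying Σ_{j=0}^{k-1}(-1)^j λ_{1+j} = 0 and Σ_{j=0}^{k-i}(-1)^j λ_{i+j} ≥ 0 for 2 ≤ i ≤ k, and the set of compositions of n into k-1 nonnegative even parts. -/

import Mathlib

open Finset

def Ssum (k : ℕ) (lam : Fin k → ℤ) (i : ℕ) : ℤ :=
  ∑ j ∈ Finset.univ.filter (fun j : Fin k => i ≤ (j : ℕ)), (-1 : ℤ) ^ ((j : ℕ) - i) * lam j

lemma Ssum_of_ge (k : ℕ) (lam : Fin k → ℤ) (i : ℕ) (h : k ≤ i) :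
    Ssum k lam i = 0 := by
  unfold Ssum
  rw [Finset.filter_false_of_mem, Finset.sum_empty]
  intro j _
  simp only [not_le]
  exact lt_of_lt_of_le j.isLt h

lemma Ssum_rec (k : ℕ) (lam : Fin k → ℤ) (i : ℕ) (h : i < k) :
    Ssum k lam i = lam ⟨i, h⟩ - Ssum k lam (i + 1) := by
  unfold Ssum
  have hsplit : Finset.univ.filter (fun j : Fin k => i ≤ (j : ℕ)) =
      insert ⟨i, h⟩ (Finset.univ.filter (fun j : Fin k => i + 1 ≤ (j : ℕ))) := by
    ext j
    simp only [Finset.mem_filter, Finset.mem_univ, true_and, Finset.mem_insert, Fin.ext_iff]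
    omega
  rw [hsplit, Finset.sum_insert (by simp)]
  simp only [Nat.sub_self, pow_zero, one_mul]
  rw [sub_eq_add_neg, ← Finset.sum_neg_distrib]
  congr 1
  apply Finset.sum_congr rfl
  intro j hj
  simp only [Finset.mem_filter] at hj
  have hji : (j : ℕ) - i = ((j : ℕ) - (i + 1)) + 1 := by omega
  rw [hji, pow_succ]
  ring

lemma telescope (k : ℕ) (hk : 0 < k) (f : ℕ → ℤ) :
    ∑ i ∈ Finset.range k, (f i + f (i + 1)) =
      f 0 + f k + 2 * ∑ i ∈ Finset.Ico 1 k, f i := by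
  induction k with
  | zero => omega
  | succ m ih =>
    rcases Nat.eq_zero_or_pos m with hm | hm
    · subst hm; simp
    · rw [Finset.sum_range_succ, ih hm, Finset.sum_Ico_succ_top hm]
      ring

def Tfun (k : ℕ) (mu : Fin (k - 1) → ℕ) (i : ℕ) : ℤ :=
  if h : 0 < i ∧ i < k then ((mu ⟨i - 1, by omega⟩ : ℕ) / 2 : ℕ) else 0

def lamOf (k : ℕ) (mu : Fin (k - 1) → ℕ) : Fin k → ℤ :=
  fun i => Tfun k mu (i : ℕ) + Tfun k mu ((i : ℕ) + 1)

lemma Ssum_lamOf (k : ℕ) (mu : Fin (k - 1) → ℕ) (i : ℕ) :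
    Ssum k (lamOf k mu) i = Tfun k mu i := by
  have key : ∀ d i, k - i ≤ d → Ssum k (lamOf k mu) i = Tfun k mu i := by
    intro d
    induction d with
    | zero =>
      intro i hi
      rw [Ssum_of_ge _ _ _ (by omega), Tfun, dif_neg (by omega)]
    | succ d ih =>
      intro i hi
      by_cases h : i < k
      · rw [Ssum_rec k _ i h, ih (i + 1) (by omega)]
        show lamOf k mu ⟨i, h⟩ - _ = _
        simp only [lamOf]
        ring
      · rw [Ssum_of_ge _ _ _ (by omega), Tfun, dif_neg (by omega)]
  exact key (k - i) i le_rfl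

lemma sum_lam_eq (k : ℕ) (lam : Fin k → ℤ) :
    ∑ i, lam i = ∑ i ∈ Finset.range k, (Ssum k lam i + Ssum k lam (i + 1)) := by
  rw [← Fin.sum_univ_eq_sum_range (fun i => Ssum k lam i + Ssum k lam (i + 1)) k]
  apply Finset.sum_congr rfl
  intro i _
  have := Ssum_rec k lam (i : ℕ) i.isLt
  rw [Fin.eta] at this
  omega

lemma stmt_sum_eq (k : ℕ) (lam : Fin k → ℤ) (i : Fin k) :
    ∑ j ∈ Finset.univ.filter (fun j : Fin k => i ≤ j),
      (-1 : ℤ) ^ ((j : ℕ) - (i : ℕ)) * lam j = Ssum k lam (i : ℕ) := by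
  unfold Ssum
  apply Finset.sum_congr ?_ (fun _ _ => rfl)
  ext j
  simp only [Finset.mem_filter, Fin.le_def]

lemma first_sum_eq {k : ℕ} (hk : 0 < k) (lam : Fin k → ℤ) :
    (∑ j ∈ Finset.univ.filter (fun j : Fin k => (⟨0, hk⟩ : Fin k) ≤ j),
      (-1 : ℤ) ^ ((j : ℕ)) * lam j) = Ssum k lam 0 := by
  have := stmt_sum_eq k lam ⟨0, hk⟩
  simpa using this

lemma Tfun_nonneg (k : ℕ) (mu : Fin (k - 1) → ℕ) (i : ℕ) : 0 ≤ Tfun k mu i := by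
  unfold Tfun
  split <;> positivity

-- given membership data, nonnegativity of all Ssum
lemma Ssum_nonneg_of {k : ℕ} (hk : 0 < k) (lam : Fin k → ℤ)
    (h1 : Ssum k lam 0 = 0)
    (h2 : ∀ i : Fin k, 0 < (i : ℕ) →
      0 ≤ ∑ j ∈ Finset.univ.filter (fun j : Fin k => i ≤ j),
        (-1 : ℤ) ^ ((j : ℕ) - (i : ℕ)) * lam j) :
    ∀ i : ℕ, 0 ≤ Ssum k lam i := by
  intro i
  rcases Nat.eq_zero_or_pos i with rfl | hi
  · omega
  by_cases h : i < k
  · have := h2 ⟨i, h⟩ hi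
    rwa [stmt_sum_eq] at this
  · rw [Ssum_of_ge _ _ _ (by omega)]

-- weight identity on the lam side
lemma weight_eq {k : ℕ} (hk : 0 < k) (lam : Fin k → ℤ) (h1 : Ssum k lam 0 = 0) :
    ∑ i, lam i = 2 * ∑ i ∈ Finset.Ico 1 k, Ssum k lam i := by
  rw [sum_lam_eq, telescope k hk, h1, Ssum_of_ge k lam k le_rfl]
  ring

-- Fin (k-1) sums vs Ico 1 k sums
lemma fin_sum_eq_Ico (k : ℕ) (f : ℕ → ℤ) :
    ∑ j : Fin (k - 1), f ((j : ℕ) + 1) = ∑ i ∈ Finset.Ico 1 k, f i := by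
  rw [Finset.sum_Ico_eq_sum_range]
  rw [Fin.sum_univ_eq_sum_range (fun i => f (i + 1)) (k - 1)]
  apply Finset.sum_congr rfl
  intro i _
  rw [Nat.add_comm]


/-- integer sequences `(λ₁,…,λ_k)` of weight `n` with vanishing full
alternating sum and nonnegative alternating tail sums are in bijection with compositions
of `n` into `k-1` nonnegative even parts. -/
theorem stmt_5 (k n : ℕ) (hk : 0 < k) :
    Nonempty (
      {lam : Fin k → ℤ |
        (∑ j ∈ Finset.univ.filter (fun j : Fin k => (⟨0, hk⟩ : Fin k) ≤ j),
            (-1 : ℤ) ^ ((j : ℕ)) * lam j) = 0 ∧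
        (∀ i : Fin k, 0 < (i : ℕ) →
          0 ≤ ∑ j ∈ Finset.univ.filter (fun j : Fin k => i ≤ j),
            (-1 : ℤ) ^ ((j : ℕ) - (i : ℕ)) * lam j) ∧
        ∑ i, lam i = (n : ℤ)} ≃
      {mu : Fin (k - 1) → ℕ | (∀ i, Even (mu i)) ∧ ∑ i, mu i = n}) := by
  constructor
  refine
    { toFun := fun x => ⟨fun j => 2 * (Ssum k x.1 ((j : ℕ) + 1)).toNat, ?_, ?_⟩
      invFun := fun y => ⟨lamOf k y.1, ?_, ?_, ?_⟩
      left_inv := ?_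
      right_inv := ?_ }
  · -- Even
    intro i
    exact even_two_mul _
  · -- sum mu = n
    obtain ⟨h1, h2, h3⟩ := x.2
    have h0 : Ssum k x.1 0 = 0 := by rwa [first_sum_eq hk] at h1
    have hpos := Ssum_nonneg_of hk x.1 h0 h2
    have key : ∑ j : Fin (k - 1), (2 * Ssum k x.1 ((j : ℕ) + 1)) = (n : ℤ) := by
      have := fin_sum_eq_Ico k (fun m => 2 * Ssum k x.1 m)
      rw [this, ← Finset.mul_sum, ← weight_eq hk x.1 h0, h3]
    have hz : ((∑ j : Fin (k - 1), 2 * (Ssum k x.1 ((j : ℕ) + 1)).toNat : ℕ) : ℤ)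
        = (n : ℤ) := by
      push_cast
      refine Eq.trans (Finset.sum_congr rfl fun j _ => ?_) key
      rw [Int.toNat_of_nonneg (hpos _)]
    exact_mod_cast hz
  · -- first condition for lamOf
    rw [first_sum_eq hk, Ssum_lamOf, Tfun, dif_neg (by omega)]
  · -- tail sums nonneg
    intro i _
    rw [stmt_sum_eq, Ssum_lamOf]
    exact Tfun_nonneg _ _ _
  · -- weight
    obtain ⟨he, hs⟩ := y.2
    have h0 : Ssum k (lamOf k y.1) 0 = 0 := by
      rw [Ssum_lamOf, Tfun, dif_neg (by omega)]
    have e : ∀ j : Fin (k - 1), (2 * Tfun k y.1 ((j : ℕ) + 1)) = (y.1 j : ℤ) := by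
      intro j
      have hjlt := j.isLt
      rw [Tfun, dif_pos (⟨Nat.succ_pos _, by omega⟩ : 0 < (j : ℕ) + 1 ∧ (j : ℕ) + 1 < k)]
      have hfin : (⟨(j : ℕ) + 1 - 1, by omega⟩ : Fin (k - 1)) = j := by
        apply Fin.ext; simp
      rw [hfin]
      obtain ⟨r, hr⟩ := he j
      have hr2 : y.1 j / 2 = r := by omega
      rw [hr2, hr]
      push_cast
      ring
    rw [weight_eq hk (lamOf k y.1) h0]
    have : ∀ i ∈ Finset.Ico 1 k, Ssum k (lamOf k y.1) i = Tfun k y.1 i :=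
      fun i _ => Ssum_lamOf k y.1 i
    rw [Finset.sum_congr rfl this, ← fin_sum_eq_Ico k (Tfun k y.1), Finset.mul_sum,
      Finset.sum_congr rfl (fun j _ => e j)]
    exact_mod_cast hs
  · -- left inverse
    intro x
    apply Subtype.ext
    funext i
    obtain ⟨h1, h2, h3⟩ := x.2
    have h0 : Ssum k x.1 0 = 0 := by rwa [first_sum_eq hk] at h1
    have hpos := Ssum_nonneg_of hk x.1 h0 h2
    have hT : ∀ m : ℕ,
        Tfun k (fun j => 2 * (Ssum k x.1 ((j : ℕ) + 1)).toNat) m = Ssum k x.1 m := by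
      intro m
      unfold Tfun
      split
      case isTrue h =>
        have hm : m - 1 + 1 = m := by omega
        simp only [Fin.val_mk, hm, Nat.mul_div_cancel_left _ (by norm_num : 0 < 2)]
        exact Int.toNat_of_nonneg (hpos m)
      case isFalse h =>
        rcases Nat.eq_zero_or_pos m with rfl | hm
        · exact h0.symm
        · rw [Ssum_of_ge _ _ _ (by omega)]
    show lamOf k _ i = x.1 i
    simp only [lamOf, hT]
    have hrec := Ssum_rec k x.1 (i : ℕ) i.isLt
    rw [Fin.eta] at hrec
    linarith
  · -- right inverse
    intro y
    apply Subtype.ext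
    funext j
    show 2 * (Ssum k (lamOf k y.1) ((j : ℕ) + 1)).toNat = y.1 j
    have hjlt := j.isLt
    rw [Ssum_lamOf, Tfun, dif_pos (⟨Nat.succ_pos _, by omega⟩ :
      0 < (j : ℕ) + 1 ∧ (j : ℕ) + 1 < k)]
    have hfin : (⟨(j : ℕ) + 1 - 1, by omega⟩ : Fin (k - 1)) = j := by
      apply Fin.ext; simp
    rw [hfin, Int.toNat_natCast]
    obtain ⟨r, hr⟩ := y.2.1 j
    omega
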